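/- Let P ⊆ ℝ^N be a closed, convex and CP admissible set. Then P = W + K (Minkowski sum), where W ⊆ P is a compact, convex and CP admissible set, and K ⊆ P is a closed, convex and CP admissible cone. -/

import Mathlib

open Set
open scoped Pointwise

/-- `P` is coordinate projection (CP) admissible: for every `x ∈ P` and every
index set `J ⊆ supp(x)`, the coordinate projection `π_J(x)` belongs to `P`. -/
def CPAdmissible {N : ℕ} (P : Set (Fin N → ℝ)) : Prop :=
  ∀ x ∈ P, ∀ J : Set (Fin N), J ⊆ {i | x i ≠ 0} → J.indicator x ∈ P

section Aux
variable {N : ℕ} {P : Set (Fin N → ℝ)}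

lemma cp_zero_mem (hne : P.Nonempty) (hcp : CPAdmissible P) : (0 : Fin N → ℝ) ∈ P := by
  obtain ⟨x, hx⟩ := hne
  have := hcp x hx ∅ (by simp)
  simp at this; exact this

lemma cp_single_mem (hcp : CPAdmissible P) {x} (hx : x ∈ P) (i : Fin N) :
    Pi.single i (x i) ∈ P := by
  by_cases h : x i = 0
  · rw [h, Pi.single_zero]
    have := hcp x hx ∅ (by simp); simp at this; exact this
  · have h2 := hcp x hx {i} (by intro j hj; simp at hj; subst hj; exact h)
    convert h2 using 1
    funext j
    rcases eq_or_ne j i with rfl | hji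
    · simp [Set.indicator]
    · simp [Set.indicator, Pi.single_apply, hji]

lemma cp_scale_mem (hconv : Convex ℝ P) (h0 : (0:Fin N → ℝ) ∈ P) {x} (hx : x ∈ P)
    {s : ℝ} (h0s : 0 ≤ s) (hs1 : s ≤ 1) : s • x ∈ P := by
  have := hconv hx h0 h0s (by linarith : (0:ℝ) ≤ 1 - s) (by ring)
  simpa using this

lemma cp_shrink_update (hconv : Convex ℝ P) (hcp : CPAdmissible P) {x} (hx : x ∈ P)
    (a : Fin N) {s : ℝ} (h0s : 0 ≤ s) (hs1 : s ≤ 1) :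
    Function.update x a (s * x a) ∈ P := by
  have hy : ({i | x i ≠ 0} \ {a}).indicator x ∈ P :=
    hcp x hx _ diff_subset
  have h2 := hconv hx hy h0s (by linarith : (0:ℝ) ≤ 1 - s) (by ring)
  convert h2 using 1
  funext j
  rw [Function.update_apply]
  rcases eq_or_ne j a with rfl | hja
  · simp [Set.indicator]
  · by_cases hj0 : x j = 0
    · simp [hja, Set.indicator, hj0]
    · simp only [if_neg hja, Pi.add_apply, Pi.smul_apply, Set.indicator,
        Set.mem_diff, Set.mem_setOf_eq, Set.mem_singleton_iff, smul_eq_mul]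
      rw [if_pos ⟨hj0, hja⟩]
      ring

lemma cp_shrink (hconv : Convex ℝ P) (hcp : CPAdmissible P)
    (s : Fin N → ℝ) (hs : ∀ i, 0 ≤ s i ∧ s i ≤ 1) {x} (hx : x ∈ P) :
    (fun i => s i * x i) ∈ P := by
  classical
  have key : ∀ S : Finset (Fin N), (fun i => if i ∈ S then s i * x i else x i) ∈ P := by
    intro S
    induction S using Finset.induction_on with
    | empty => simpa using hx
    | @insert a S ha ih =>
      have h2 := cp_shrink_update hconv hcp ih a (hs a).1 (hs a).2
      convert h2 using 1
      funext j
      rw [Function.update_apply]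
      rcases eq_or_ne j a with rfl | hja
      · simp [ha]
      · simp [hja, Finset.mem_insert]
  have := key Finset.univ
  simpa using this


lemma single_smul_eq {N : ℕ} (i : Fin N) (r a : ℝ) :
    r • (Pi.single i a : Fin N → ℝ) = Pi.single i (r * a) := by
  funext j
  rcases eq_or_ne j i with rfl | hji
  · simp
  · simp [Pi.single_apply, hji]

end Aux

/-- A closed, convex, CP admissible set decomposes as `P = W + K` with `W ⊆ P`
compact, convex, CP admissible and `K ⊆ P` a closed, convex, CP admissible cone. -/
theorem stmt_9 {N : ℕ} (P : Set (Fin N → ℝ)) (hne : P.Nonempty)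
    (hcl : IsClosed P) (hconv : Convex ℝ P) (hcp : CPAdmissible P) :
    ∃ W K : Set (Fin N → ℝ),
      W ⊆ P ∧ IsCompact W ∧ Convex ℝ W ∧ CPAdmissible W ∧
      K ⊆ P ∧ IsClosed K ∧ Convex ℝ K ∧ CPAdmissible K ∧
      (0 : Fin N → ℝ) ∈ K ∧ (∀ x ∈ K, ∀ t : ℝ, 0 ≤ t → t • x ∈ K) ∧
      P = W + K := by
  classical
  have h0 : (0 : Fin N → ℝ) ∈ P := cp_zero_mem hne hcp
  -- bounds on coordinates in non-unbounded directions
  have hboundP : ∀ i : Fin N, ∃ b : ℝ, 0 ≤ b ∧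
      ((¬ ∀ t : ℝ, 0 ≤ t → Pi.single i t ∈ P) → ∀ x ∈ P, x i ≤ b) := by
    intro i
    by_cases hp : ∀ t : ℝ, 0 ≤ t → Pi.single i t ∈ P
    · exact ⟨0, le_refl _, fun h => absurd hp h⟩
    · push_neg at hp
      obtain ⟨t, ht0, htP⟩ := hp
      refine ⟨t, ht0, fun _ x hx => ?_⟩
      by_contra hxi
      push_neg at hxi
      have hxP : Pi.single i (x i) ∈ P := cp_single_mem hcp hx i
      have hxi0 : 0 < x i := lt_of_le_of_lt ht0 hxi
      refine htP ?_
      have hmem := cp_scale_mem hconv h0 hxP (s := t / x i)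
        (div_nonneg ht0 hxi0.le) ((div_le_one hxi0).2 hxi.le)
      rw [single_smul_eq, div_mul_cancel₀ _ (ne_of_gt hxi0)] at hmem
      exact hmem
  have hboundM : ∀ i : Fin N, ∃ b : ℝ, 0 ≤ b ∧
      ((¬ ∀ t : ℝ, 0 ≤ t → Pi.single i (-t) ∈ P) → ∀ x ∈ P, -b ≤ x i) := by
    intro i
    by_cases hp : ∀ t : ℝ, 0 ≤ t → Pi.single i (-t) ∈ P
    · exact ⟨0, le_refl _, fun h => absurd hp h⟩
    · push_neg at hp
      obtain ⟨t, ht0, htP⟩ := hp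
      refine ⟨t, ht0, fun _ x hx => ?_⟩
      by_contra hxi
      push_neg at hxi
      -- x i < -t
      have hxP : Pi.single i (x i) ∈ P := cp_single_mem hcp hx i
      have hxi0 : x i < 0 := lt_of_lt_of_le hxi (by linarith)
      refine htP ?_
      have hr0 : 0 ≤ -t / x i := by
        rw [div_nonneg_iff]
        right
        exact ⟨by linarith, hxi0.le⟩
      have hr1 : -t / x i ≤ 1 := by
        rw [div_le_iff_of_neg hxi0]
        linarith
      have hmem := cp_scale_mem hconv h0 hxP hr0 hr1
      rw [single_smul_eq, div_mul_cancel₀ _ (ne_of_lt hxi0)] at hmem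
      exact hmem
  choose bP hbP0 hbP using hboundP
  choose bM hbM0 hbM using hboundM
  set c : ℝ := ∑ i, (bP i + bM i) with hc
  have hterm : ∀ i : Fin N, 0 ≤ bP i + bM i := fun i => add_nonneg (hbP0 i) (hbM0 i)
  have hc0 : 0 ≤ c := Finset.sum_nonneg fun i _ => hterm i
  have hble : ∀ i, bP i + bM i ≤ c := by
    intro i
    rw [hc]
    exact Finset.single_le_sum (f := fun i => bP i + bM i) (fun j _ => hterm j)
      (Finset.mem_univ i)
  have hbPc : ∀ i, bP i ≤ c := fun i => by have := hble i; have := hbM0 i; linarith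
  have hbMc : ∀ i, bM i ≤ c := fun i => by have := hble i; have := hbP0 i; linarith
  set W : Set (Fin N → ℝ) := P ∩ {x | ∀ i, |x i| ≤ c} with hW
  set K : Set (Fin N → ℝ) := {v | ∀ t : ℝ, 0 ≤ t → t • v ∈ P} with hKdef
  have hK0 : (0 : Fin N → ℝ) ∈ K := fun t _ => by simpa using h0
  have hKP : K ⊆ P := fun v hv => by simpa using hv 1 zero_le_one
  have hKcone : ∀ x ∈ K, ∀ t : ℝ, 0 ≤ t → t • x ∈ K := by
    intro x hx t ht s hs
    rw [smul_smul]
    exact hx (s * t) (mul_nonneg hs ht)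
  have hKadd : ∀ a b : Fin N → ℝ, a ∈ K → b ∈ K → a + b ∈ K := by
    intro a b ha hb t ht
    have h1 := ha (2*t) (by linarith)
    have h2 := hb (2*t) (by linarith)
    have h3 := hconv h1 h2 (by norm_num : (0:ℝ) ≤ 1/2) (by norm_num : (0:ℝ) ≤ 1/2)
      (by norm_num)
    convert h3 using 1
    rw [smul_smul, smul_smul, smul_add, show 1/2*(2*t) = t by ring]
  have hKclosed : IsClosed K := by
    have hKeq : K = ⋂ (t : ℝ) (_ : 0 ≤ t), (fun v : Fin N → ℝ => t • v) ⁻¹' P := by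
      ext v; simp [hKdef, Set.mem_iInter]
    rw [hKeq]
    exact isClosed_iInter fun t => isClosed_iInter fun _ =>
      hcl.preimage (continuous_const_smul t)
  have hKconv : Convex ℝ K := by
    intro u hu v hv a b ha hb hab t ht
    rw [smul_add, smul_smul, smul_smul, mul_comm t a, mul_comm t b,
      ← smul_smul, ← smul_smul]
    exact hconv (hu t ht) (hv t ht) ha hb hab
  have hKcp : CPAdmissible K := by
    intro v hv J hJ t ht
    rcases eq_or_lt_of_le ht with rfl | htpos
    · simpa using h0
    · have hsub : J ⊆ {i | (t • v) i ≠ 0} := by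
        intro j hj
        have := hJ hj
        simp only [Set.mem_setOf_eq, Pi.smul_apply, smul_eq_mul] at this ⊢
        exact mul_ne_zero (ne_of_gt htpos) this
      have := hcp (t • v) (hv t ht) J hsub
      convert this using 1
      funext j
      by_cases hj : j ∈ J <;> simp [Set.indicator, hj]
  -- W properties
  have hWP : W ⊆ P := Set.inter_subset_left
  have hWclosed : IsClosed W := by
    refine hcl.inter ?_
    have : {x : Fin N → ℝ | ∀ i, |x i| ≤ c} = ⋂ i, {x : Fin N → ℝ | |x i| ≤ c} := by
      ext x; simp
    rw [this]
    exact isClosed_iInter fun i =>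
      isClosed_le ((continuous_apply i).abs) continuous_const
  have hWcompact : IsCompact W := by
    refine IsCompact.of_isClosed_subset (isCompact_Icc
      (a := fun _ : Fin N => -c) (b := fun _ => c)) hWclosed ?_
    rintro x ⟨-, hx⟩
    constructor
    · intro i; exact neg_le_of_abs_le (hx i)
    · intro i; exact le_of_abs_le (hx i)
  have hWconv : Convex ℝ W := by
    refine hconv.inter ?_
    intro x hx y hy a b ha hb hab i
    calc |(a • x + b • y) i| = |a * x i + b * y i| := by simp
    _ ≤ |a * x i| + |b * y i| := abs_add_le _ _
    _ = a * |x i| + b * |y i| := by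
        rw [abs_mul, abs_mul, abs_of_nonneg ha, abs_of_nonneg hb]
    _ ≤ a * c + b * c := by
        have := hx i; have := hy i
        gcongr
    _ = c := by rw [← add_mul, hab, one_mul]
  have hWcp : CPAdmissible W := by
    rintro x ⟨hxP, hxB⟩ J hJ
    refine ⟨hcp x hxP J hJ, fun i => ?_⟩
    by_cases hi : i ∈ J
    · simpa [Set.indicator, hi] using hxB i
    · simpa [Set.indicator, hi] using hc0
  -- sum lemma : P is closed under adding elements of K
  have haddray : ∀ u ∈ P, ∀ v ∈ K, u + v ∈ P := by
    intro u hu v hv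
    have hmem : ∀ n : ℕ, (1 - 1/(n+1:ℝ)) • u + v ∈ P := by
      intro n
      have hn : (0:ℝ) < n + 1 := by positivity
      have h1 : ((n:ℝ)+1) • v ∈ P := hv _ (by positivity)
      have ha : (0:ℝ) ≤ 1 - 1/(n+1) := by
        have : 1/(n+1:ℝ) ≤ 1 := by
          rw [div_le_one hn]; linarith
        linarith
      have hb : (0:ℝ) ≤ 1/(n+1) := by positivity
      have h3 := hconv hu h1 ha hb (by ring)
      convert h3 using 2
      rw [smul_smul]
      rw [show (1/(n+1:ℝ)) * ((n:ℝ)+1) = 1 by field_simp]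
      rw [one_smul]
    have htend : Filter.Tendsto (fun n : ℕ => (1 - 1/(n+1:ℝ)) • u + v)
        Filter.atTop (nhds (u + v)) := by
      have h := tendsto_one_div_add_atTop_nhds_zero_nat (𝕜 := ℝ)
      have h2 : Filter.Tendsto (fun n : ℕ => (1 - 1/(n+1:ℝ))) Filter.atTop (nhds 1) := by
        have := Filter.Tendsto.sub (tendsto_const_nhds (x := (1:ℝ))) h
        simpa using this
      have h3 := (h2.smul_const u).add (tendsto_const_nhds (x := v))
      simpa using h3
    exact hcl.mem_of_tendsto htend (Filter.Eventually.of_forall hmem)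
  refine ⟨W, K, hWP, hWcompact, hWconv, hWcp, hKP, hKclosed, hKconv, hKcp, hK0,
    hKcone, ?_⟩
  apply Set.Subset.antisymm
  · -- P ⊆ W + K
    intro x hx
    set s : Fin N → ℝ := fun i => if |x i| ≤ c then 1 else c / |x i| with hs
    have hsb : ∀ i, 0 ≤ s i ∧ s i ≤ 1 := by
      intro i
      rw [hs]
      by_cases hi : |x i| ≤ c
      · simp [hi]
      · push_neg at hi
        have habs : 0 < |x i| := lt_of_le_of_lt hc0 hi
        simp only [if_neg (not_le.2 hi)]
        exact ⟨div_nonneg hc0 habs.le, (div_le_one habs).2 hi.le⟩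
    set w : Fin N → ℝ := fun i => s i * x i with hw
    have hwP : w ∈ P := cp_shrink hconv hcp s hsb hx
    have hwW : w ∈ W := by
      refine ⟨hwP, fun i => ?_⟩
      rw [hw, hs]
      by_cases hi : |x i| ≤ c
      · simp only [if_pos hi]
        simpa using hi
      · push_neg at hi
        have habs : 0 < |x i| := lt_of_le_of_lt hc0 hi
        simp only [if_neg (not_le.2 hi)]
        rw [abs_mul, abs_div, abs_abs, abs_of_nonneg hc0,
          div_mul_cancel₀ _ habs.ne']
    have hkK : x - w ∈ K := by
      have hx_sum : x - w = ∑ i, Pi.single i ((x - w) i) :=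
        (Finset.univ_sum_single _).symm
      rw [hx_sum]
      refine Finset.sum_induction _ (· ∈ K) hKadd hK0 ?_
      intro i _
      -- show Pi.single i ((x-w) i) ∈ K
      intro t ht
      rw [single_smul_eq]
      by_cases hi : |x i| ≤ c
      · have : (x - w) i = 0 := by
          simp [hw, hs, hi]
        rw [this, mul_zero, Pi.single_zero]
        exact h0
      · push_neg at hi
        have habs : 0 < |x i| := lt_of_le_of_lt hc0 hi
        have hkival : (x - w) i = x i - (c / |x i|) * x i := by
          simp [hw, hs, if_neg (not_le.2 hi)]
        rcases lt_or_ge 0 (x i) with hxi | hxi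
        · -- positive coordinate, unbounded above
          have hxic : c < x i := by rwa [abs_of_pos hxi] at hi
          have hUnb : ∀ t : ℝ, 0 ≤ t → Pi.single i t ∈ P := by
            by_contra hU
            have := hbP i hU x hx
            have := hbPc i
            linarith
          apply hUnb
          have hki : 0 ≤ (x - w) i := by
            rw [hkival, abs_of_pos hxi]
            have : c / x i ≤ 1 := (div_le_one hxi).2 hxic.le
            nlinarith
          exact mul_nonneg ht hki
        · -- negative coordinate, unbounded below
          have hxin : x i < 0 := by
            rcases lt_or_eq_of_le hxi with h' | h'
            · exact h'
            · exfalso; rw [h'] at hi; simp at hi; linarith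
          have hxic : x i < -c := by
            rw [abs_of_neg hxin] at hi; linarith
          have hUnb : ∀ t : ℝ, 0 ≤ t → Pi.single i (-t) ∈ P := by
            by_contra hU
            have := hbM i hU x hx
            have := hbMc i
            linarith
          have hki : (x - w) i ≤ 0 := by
            rw [hkival, abs_of_neg hxin]
            have h1 : c / (-x i) ≤ 1 := by
              rw [div_le_one (by linarith)]; linarith
            nlinarith
          have hfin := hUnb (t * (-(x - w) i)) (mul_nonneg ht (by linarith))
          rw [show -(t * (-(x - w) i)) = t * (x - w) i by ring] at hfin
          exact hfin
    rw [Set.mem_add]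
    exact ⟨w, hwW, x - w, hkK, by ring⟩
  · -- W + K ⊆ P
    rintro z hz
    rw [Set.mem_add] at hz
    obtain ⟨u, hu, v, hv, rfl⟩ := hz
    exact haddray u (hWP hu) v hv
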